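/- Let q be a positive integer with q ∉ {2, 4, 5, 6, 7, 8, 12, 47}. Then for every feasible pair (q,c), the number n_q(c) = (q+1)(q+2)·c + (2q³ + 3q² − q) + (q⁴ − q²)/c satisfies n_q(c) ≥ 4q³ + 6q². Moreover the bound is attained: (q,q) is feasible and n_q(q) = 4q³ + 6q². -/

import Mathlib

/-- A pair `(q, c)` of positive integers is *feasible* for an SRNT graph if
`1 ≤ c ≤ q(q+1)`, `c` divides `q⁴ - q²`, `c + 2q` divides `q(q+1)(q+2)(q+3)`,
and the integers `α = (q⁴ - q²)/c` and `β = q(q+1)(q+2)(q+3)/(c+2q)` have the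
same parity. -/
def Feasible (q c : ℤ) : Prop :=
  0 < q ∧ 1 ≤ c ∧ c ≤ q * (q + 1) ∧
  c ∣ q ^ 4 - q ^ 2 ∧
  (c + 2 * q) ∣ q * (q + 1) * (q + 2) * (q + 3) ∧
  ((q ^ 4 - q ^ 2) / c) % 2 = (q * (q + 1) * (q + 2) * (q + 3) / (c + 2 * q)) % 2

/-- The number of vertices `n_q(c) = (q+1)(q+2)c + (2q³ + 3q² - q) + (q⁴ - q²)/c`. -/
def nq (q c : ℤ) : ℤ :=
  (q + 1) * (q + 2) * c + (2 * q ^ 3 + 3 * q ^ 2 - q) + (q ^ 4 - q ^ 2) / c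

lemma not_feas1 (q : ℤ) (hex : q ∉ ({2, 4, 5, 6, 7, 8, 12, 47} : Set ℤ)) :
    ¬ Feasible q (q - 1) := by
  rintro ⟨hq, hc1, hc2, hdvd1, hdvd2, hpar⟩
  have hq2 : 2 ≤ q := by omega
  obtain ⟨k, hk⟩ := hdvd2
  have h280 : (3 * q - 1) ∣ 280 := by
    refine ⟨81 * k - (27*q^3 + 171*q^2 + 354*q + 280), ?_⟩
    have : q - 1 + 2 * q = 3 * q - 1 := by ring
    rw [this] at hk
    linear_combination 81 * hk
  have hb : 3 * q - 1 ≤ 280 := Int.le_of_dvd (by norm_num) h280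
  have : q ≤ 93 := by omega
  interval_cases q <;> first | omega | (norm_num at hex) <;> norm_num at hpar

lemma not_feas2 (q : ℤ) (hex : q ∉ ({2, 4, 5, 6, 7, 8, 12, 47} : Set ℤ)) :
    ¬ Feasible q (q - 2) := by
  rintro ⟨hq, hc1, hc2, hdvd1, hdvd2, hpar⟩
  have hq3 : 3 ≤ q := by omega
  obtain ⟨k, hk⟩ := hdvd1
  have h12 : (q - 2) ∣ 12 := by
    refine ⟨k - (q^3 + 2*q^2 + 3*q + 6), ?_⟩
    linear_combination hk
  have hb : q - 2 ≤ 12 := Int.le_of_dvd (by norm_num) h12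
  obtain ⟨m, hm⟩ := hdvd2
  have h880 : (3 * q - 2) ∣ 880 := by
    refine ⟨81 * m - (27*q^3 + 180*q^2 + 417*q + 440), ?_⟩
    have : q - 2 + 2 * q = 3 * q - 2 := by ring
    rw [this] at hm
    linear_combination 81 * hm
  have hub : q ≤ 14 := by omega
  interval_cases q <;> first | omega | (norm_num at hex) <;> norm_num at hpar | norm_num at h12 | norm_num at h880

lemma feas_q (q : ℤ) (hq : 0 < q) : Feasible q q ∧ nq q q = 4 * q ^ 3 + 6 * q ^ 2 := by
  have hq0 : q ≠ 0 := hq.ne'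
  -- 3 ∣ (q+1)(q+2)(q+3)
  obtain ⟨m, hm⟩ : (3 : ℤ) ∣ (q + 1) * (q + 2) * (q + 3) := by
    have h3 : q % 3 = 0 ∨ q % 3 = 1 ∨ q % 3 = 2 := by omega
    obtain ⟨r, hr⟩ : ∃ r, q = 3 * r ∨ q = 3 * r + 1 ∨ q = 3 * r + 2 :=
      ⟨q / 3, by omega⟩
    rcases hr with h | h | h
    · exact ⟨(3*r+1)*(3*r+2)*(r+1), by rw [h]; ring⟩
    · exact ⟨(3*r+2)*(r+1)*(3*r+4), by rw [h]; ring⟩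
    · exact ⟨(r+1)*(3*r+4)*(3*r+5), by rw [h]; ring⟩
  have hdvd1 : q ∣ q ^ 4 - q ^ 2 := ⟨q ^ 3 - q, by ring⟩
  have heq2 : q * (q + 1) * (q + 2) * (q + 3) = (q + 2 * q) * m := by
    have : q * (q + 1) * (q + 2) * (q + 3) = q * ((q+1)*(q+2)*(q+3)) := by ring
    rw [this, hm]; ring
  have hdvd2 : (q + 2 * q) ∣ q * (q + 1) * (q + 2) * (q + 3) := ⟨m, heq2⟩
  have hdivα : (q ^ 4 - q ^ 2) / q = q ^ 3 - q := by
    rw [show q ^ 4 - q ^ 2 = q * (q ^ 3 - q) by ring]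
    exact Int.mul_ediv_cancel_left _ hq0
  have hdivβ : q * (q + 1) * (q + 2) * (q + 3) / (q + 2 * q) = m := by
    rw [heq2]
    exact Int.mul_ediv_cancel_left _ (by omega)
  have hαeven : (q ^ 3 - q) % 2 = 0 := by
    have h2 : (2 : ℤ) ∣ q ^ 3 - q := by
      obtain ⟨r, hr⟩ : ∃ r, q = 2 * r ∨ q = 2 * r + 1 := ⟨q / 2, by omega⟩
      rcases hr with h | h
      · exact ⟨r * (4*r^2 - 1), by rw [h]; ring⟩
      · exact ⟨(2*r+1)*(2*r^2+2*r), by rw [h]; ring⟩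
    omega
  have hβeven : m % 2 = 0 := by
    have h2 : (2 : ℤ) ∣ 3 * m := by
      obtain ⟨r, hr⟩ : ∃ r, q = 2 * r ∨ q = 2 * r + 1 := ⟨q / 2, by omega⟩
      rcases hr with h | h
      · exact ⟨(2*r+1)*(r+1)*(2*r+3), by rw [← hm, h]; ring⟩
      · exact ⟨2*(r+1)*(2*r+3)*(r+2), by rw [← hm, h]; ring⟩
    omega
  refine ⟨⟨hq, hq, by nlinarith, hdvd1, hdvd2, by rw [hdivα, hdivβ, hαeven, hβeven]⟩, ?_⟩
  rw [nq, hdivα]; ring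

/-- **Theorem 7 (generic lower bound).**  For a positive integer
`q ∉ {2,4,5,6,7,8,12,47}`, every feasible pair `(q,c)` has
`n_q(c) ≥ 4q³ + 6q²`, and the bound is attained at `c = q`. -/
theorem srnt_theorem7_lower (q : ℤ) (hq : 0 < q)
    (hex : q ∉ ({2, 4, 5, 6, 7, 8, 12, 47} : Set ℤ)) :
    (∀ c : ℤ, Feasible q c → 4 * q ^ 3 + 6 * q ^ 2 ≤ nq q c) ∧
    Feasible q q ∧ nq q q = 4 * q ^ 3 + 6 * q ^ 2 := by
  refine ⟨?_, feas_q q hq⟩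
  intro c hF
  obtain ⟨-, hc1, hc2, hdvd1, -, -⟩ := id hF
  have hc0 : 0 < c := by omega
  obtain ⟨α, hα⟩ := hdvd1
  have hdiv : (q ^ 4 - q ^ 2) / c = α := by
    rw [hα]; exact Int.mul_ediv_cancel_left _ hc0.ne'
  have key : 0 ≤ (c - q) * ((q + 1) * (q + 2) * c - (q ^ 3 - q)) := by
    rcases le_or_gt q c with h | h
    · have h1 : 0 ≤ c - q := by omega
      have h2 : 0 ≤ (q + 1) * (q + 2) * c - (q ^ 3 - q) := by nlinarith
      exact mul_nonneg h1 h2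
    · rcases le_or_gt c (q - 3) with h3 | h3
      · have h1 : c - q ≤ 0 := by omega
        have h2 : (q + 1) * (q + 2) * c - (q ^ 3 - q) ≤ 0 := by nlinarith
        nlinarith [mul_nonneg (neg_nonneg.mpr h1) (neg_nonneg.mpr h2)]
      · -- c = q - 1 or c = q - 2, both infeasible
        exfalso
        have : c = q - 1 ∨ c = q - 2 := by omega
        rcases this with h | h
        · exact not_feas1 q hex (h ▸ hF)
        · exact not_feas2 q hex (h ▸ hF)
  rw [nq, hdiv]
  nlinarith [key, hα, hc0, mul_pos hc0 hc0]
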